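/- arXiv:2004.05348 — 2 statements merged into one kernel-verified Lean document; each statement's English description precedes it below -/
import Mathlib

section
/- Let J = α·Σ_{i=−(L−1)}^{L−1} w_i vec(A_i) vec(A_i)^H + (1−α)·Σ_{i=−(L−1)}^{L−1} w̃_i vec(B_i) vec(B_i)^H with real α, w_i, w̃_i. Then for every k with −(L−1) ≤ k ≤ L−1, J·vec(B_k) = (1−α)·w̃_k·(L − |k|)·vec(B_k); that is, vec(B_k) is an eigenvector of J with eigenvalue λ_B(k) = (1−α)·w̃_k·(L − |k|). -/
open scoped BigOperators
open Matrix

/-- The `L × L` shift (Toeplitz) matrix `U_k` with `(U_k)_{i,j} = 1` if `j - i = k`. -/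
def shiftU (L : ℕ) (k : ℤ) : Matrix (Fin L) (Fin L) ℂ :=
  Matrix.of fun i j => if (j : ℤ) - (i : ℤ) = k then 1 else 0

/-- The `2L × 2L` block-diagonal matrix `A_k = diag(U_k, U_k)`. -/
def AMat (L : ℕ) (k : ℤ) : Matrix (Fin L ⊕ Fin L) (Fin L ⊕ Fin L) ℂ :=
  Matrix.fromBlocks (shiftU L k) 0 0 (shiftU L k)

/-- The `2L × 2L` block matrix `B_k = [[0, U_k], [0, 0]]`. -/
def BMat (L : ℕ) (k : ℤ) : Matrix (Fin L ⊕ Fin L) (Fin L ⊕ Fin L) ℂ :=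
  Matrix.fromBlocks 0 (shiftU L k) 0 0

/-- Vectorization of a square matrix. -/
def vecM {n : Type*} (M : Matrix n n ℂ) : n × n → ℂ := fun p => M p.1 p.2

/-- `J = α Σ_i w_i vec(A_i) vec(A_i)^H + (1-α) Σ_i w̃_i vec(B_i) vec(B_i)^H`. -/
noncomputable def JMat (L : ℕ) (α : ℝ) (w wt : ℤ → ℝ) :
    Matrix ((Fin L ⊕ Fin L) × (Fin L ⊕ Fin L)) ((Fin L ⊕ Fin L) × (Fin L ⊕ Fin L)) ℂ :=
  (α : ℂ) • ∑ k ∈ Finset.Icc (-(L : ℤ) + 1) ((L : ℤ) - 1),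
      (w k : ℂ) • Matrix.vecMulVec (vecM (AMat L k)) (star (vecM (AMat L k)))
  + ((1 - α : ℝ) : ℂ) • ∑ k ∈ Finset.Icc (-(L : ℤ) + 1) ((L : ℤ) - 1),
      (wt k : ℂ) • Matrix.vecMulVec (vecM (BMat L k)) (star (vecM (BMat L k)))

/- ### Auxiliary lemmas -/

lemma sumM_mulVec {ι n : Type*} [Fintype n] (s : Finset ι) (f : ι → Matrix n n ℂ)
    (x : n → ℂ) : (∑ i ∈ s, f i) *ᵥ x = ∑ i ∈ s, f i *ᵥ x := by
  classical
  induction s using Finset.induction_on with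
  | empty => simp
  | insert _ _ ha ih => rw [Finset.sum_insert ha, Finset.sum_insert ha, Matrix.add_mulVec, ih]

lemma vmv_mulVec {n : Type*} [Fintype n] (u v x : n → ℂ) :
    Matrix.vecMulVec u v *ᵥ x = (v ⬝ᵥ x) • u := by
  ext i; simp only [mulVec, vecMulVec, dotProduct, of_apply, Pi.smul_apply, smul_eq_mul,
    Finset.sum_mul]
  apply Finset.sum_congr rfl; intros; ring

lemma dotA (L : ℕ) (i k : ℤ) : star (vecM (AMat L i)) ⬝ᵥ vecM (BMat L k) = 0 := by
  simp [dotProduct, Fintype.sum_prod_type, Fintype.sum_sum_type, vecM, AMat, BMat]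

lemma dotB_ne (L : ℕ) (i k : ℤ) (h : i ≠ k) :
    star (vecM (BMat L i)) ⬝ᵥ vecM (BMat L k) = 0 := by
  simp only [dotProduct, Fintype.sum_prod_type, Fintype.sum_sum_type, vecM, BMat, shiftU,
    Pi.star_apply]
  simp only [Matrix.fromBlocks_apply₁₂, Matrix.fromBlocks_apply₁₁, Matrix.fromBlocks_apply₂₁,
    Matrix.fromBlocks_apply₂₂, Matrix.zero_apply, Matrix.of_apply]
  simp
  refine Finset.sum_eq_zero fun a _ => Finset.sum_eq_zero fun b _ => ?_
  split_ifs with h1 h2 <;> simp_all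

set_option linter.unnecessarySeqFocus false in
lemma cardk (L m : ℕ) (hm : m ≤ L) :
    (Finset.univ.filter (fun p : Fin L × Fin L => ((p.2:ℤ) - (p.1:ℤ) = (m:ℤ)))).card = L - m := by
  rw [← Finset.card_range (L - m)]
  refine Finset.card_bij' (fun p _ => (p.1 : ℕ))
    (fun a ha => ((⟨a, by have := Finset.mem_range.mp ha; omega⟩ : Fin L),
      (⟨a + m, by have := Finset.mem_range.mp ha; omega⟩ : Fin L))) ?_ ?_ ?_ ?_
  · intro p hp
    simp only [Finset.mem_filter] at hp
    have h1 := p.1.isLt; have h2 := p.2.isLt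
    have hp2 := hp.2
    refine Finset.mem_range.mpr ?_
    show (p.1 : ℕ) < L - m
    omega
  · intro a ha
    simp only [Finset.mem_filter, Finset.mem_univ, true_and]
    push_cast; ring
  · intro p hp
    simp only [Finset.mem_filter] at hp
    have := hp.2
    ext <;> simp <;> omega
  · intro a ha; rfl

lemma cardk' (L : ℕ) (k : ℤ) (hk : k.natAbs ≤ L) :
    (Finset.univ.filter (fun p : Fin L × Fin L => ((p.2:ℤ) - (p.1:ℤ) = k))).card
      = L - k.natAbs := by
  rcases le_or_gt 0 k with h | h
  · have hke : k = (k.natAbs : ℤ) := by omega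
    rw [hke]; exact cardk L k.natAbs hk
  · have hke : -k = (k.natAbs : ℤ) := by omega
    have hswap : (Finset.univ.filter (fun p : Fin L × Fin L => ((p.2:ℤ) - (p.1:ℤ) = k))).card
        = (Finset.univ.filter
            (fun p : Fin L × Fin L => ((p.2:ℤ) - (p.1:ℤ) = (k.natAbs:ℤ)))).card := by
      refine Finset.card_nbij' Prod.swap Prod.swap ?_ ?_ ?_ ?_ <;>
        intro p hp <;> simp_all [Finset.mem_filter] <;> omega
    rw [hswap]; exact cardk L k.natAbs hk

lemma sum_ite_card (L : ℕ) (k : ℤ) (hk : k.natAbs ≤ L) :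
    ∑ a : Fin L, ∑ b : Fin L, (if ((b:ℤ) - (a:ℤ) = k) then (1:ℂ) else 0)
      = ((L - k.natAbs : ℕ) : ℂ) := by
  classical
  have h1 : ∑ p : Fin L × Fin L, (if ((p.2:ℤ) - (p.1:ℤ) = k) then (1:ℂ) else 0)
      = ∑ a : Fin L, ∑ b : Fin L, (if ((b:ℤ) - (a:ℤ) = k) then (1:ℂ) else 0) :=
    Fintype.sum_prod_type _
  rw [← h1, Finset.sum_boole, cardk' L k hk]

lemma dotB_eq (L : ℕ) (k : ℤ) (hk : k.natAbs ≤ L) :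
    star (vecM (BMat L k)) ⬝ᵥ vecM (BMat L k) = ((L - k.natAbs : ℕ) : ℂ) := by
  simp only [dotProduct, Fintype.sum_prod_type, Fintype.sum_sum_type, vecM, BMat, shiftU,
    Pi.star_apply]
  simp only [Matrix.fromBlocks_apply₁₂, Matrix.fromBlocks_apply₁₁, Matrix.fromBlocks_apply₂₁,
    Matrix.fromBlocks_apply₂₂, Matrix.zero_apply, Matrix.of_apply]
  simp only [star_zero, zero_mul, mul_zero, Finset.sum_const_zero, add_zero, zero_add]
  rw [← sum_ite_card L k hk]
  refine Finset.sum_congr rfl fun a _ => Finset.sum_congr rfl fun b _ => ?_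
  split_ifs <;> simp

/-- For every `-(L-1) ≤ k ≤ L-1`, `J vec(B_k) = (1-α) w̃_k (L - |k|) vec(B_k)`; i.e.
`vec(B_k)` is an eigenvector of `J` with eigenvalue `λ_B(k) = (1-α) w̃_k (L - |k|)`. -/
theorem stmt6 (L : ℕ) (α : ℝ) (w wt : ℤ → ℝ) (k : ℤ) (hk : |k| ≤ (L : ℤ) - 1) :
    JMat L α w wt *ᵥ vecM (BMat L k)
      = (((1 - α) * wt k * ((L : ℝ) - (k.natAbs : ℝ)) : ℝ) : ℂ) • vecM (BMat L k) := by
  obtain ⟨h1, h2⟩ := abs_le.mp hk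
  have hkL : k.natAbs ≤ L := by omega
  have hkmem : k ∈ Finset.Icc (-(L : ℤ) + 1) ((L : ℤ) - 1) := by
    rw [Finset.mem_Icc]
    constructor <;> omega
  rw [JMat, Matrix.add_mulVec, Matrix.smul_mulVec, Matrix.smul_mulVec,
    sumM_mulVec, sumM_mulVec]
  have hA : ∀ i ∈ Finset.Icc (-(L : ℤ) + 1) ((L : ℤ) - 1),
      ((w i : ℂ) • Matrix.vecMulVec (vecM (AMat L i)) (star (vecM (AMat L i))))
        *ᵥ vecM (BMat L k) = 0 := by
    intro i _
    rw [Matrix.smul_mulVec, vmv_mulVec, dotA]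
    simp
  rw [Finset.sum_congr rfl hA, Finset.sum_const_zero, smul_zero, zero_add]
  have hB : ∑ i ∈ Finset.Icc (-(L : ℤ) + 1) ((L : ℤ) - 1),
      ((wt i : ℂ) • Matrix.vecMulVec (vecM (BMat L i)) (star (vecM (BMat L i))))
        *ᵥ vecM (BMat L k)
      = ((wt k : ℂ) * ((L - k.natAbs : ℕ) : ℂ)) • vecM (BMat L k) := by
    rw [Finset.sum_eq_single k]
    · rw [Matrix.smul_mulVec, vmv_mulVec, dotB_eq L k hkL, smul_smul]
    · intro i _ hik
      rw [Matrix.smul_mulVec, vmv_mulVec, dotB_ne L i k hik]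
      simp
    · intro h; exact absurd hkmem h
  rw [hB, smul_smul]
  congr 1
  push_cast [Nat.cast_sub hkL]
  ring
end

section
/- (Theorem 1, Section IV, quantitative form) Let (a_n) be the Prouhet–Thue–Morse sequence, M ≥ 0, N = 2^{M+1}, and β_m = Σ_{n=0}^{N−1} a_n·n^m. Let x, y be complex sequences of length L and for each n define s_n = x if a_n = 0 and s_n = y if a_n = 1. Then for every 0 ≤ m ≤ M and every lag k with −(L−1) ≤ k ≤ L−1, Σ_{n=0}^{N−1} n^m·C_{s_n}(k) = β_m·( C_x(k) + C_y(k) ). In particular, if δ ≥ 0 and |C_x(k) + C_y(k)| ≤ δ for all k with 0 < |k| < Z, then |Σ_{n=0}^{N−1} n^m·C_{s_n}(k)| ≤ β_m·δ for all such k and all 0 ≤ m ≤ M. -/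
open scoped BigOperators

/-- Aperiodic cross-correlation of two length-`L` complex sequences. -/
noncomputable def aCorr (L : ℕ) (x y : ℕ → ℂ) (k : ℤ) : ℂ :=
  if 0 ≤ k then
    ∑ l ∈ Finset.range (L - k.toNat), x l * (starRingEnd ℂ) (y (l + k.toNat))
  else
    ∑ l ∈ Finset.range (L - (-k).toNat), x (l + (-k).toNat) * (starRingEnd ℂ) (y l)


private lemma sum_range_two_mul' (f : ℕ → ℤ) (n : ℕ) :
    ∑ i ∈ Finset.range (2 * n), f i
      = ∑ i ∈ Finset.range n, (f (2 * i) + f (2 * i + 1)) := by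
  induction n with
  | zero => simp
  | succ n ih =>
    rw [show 2 * (n + 1) = 2 * n + 1 + 1 by ring, Finset.sum_range_succ,
      Finset.sum_range_succ, ih, Finset.sum_range_succ]
    ring

private lemma ptm_le_one (a : ℕ → ℕ) (ha0 : a 0 = 0)
    (hae : ∀ k, a (2 * k) = a k) (hao : ∀ k, a (2 * k + 1) = 1 - a k) :
    ∀ n, a n ≤ 1 := by
  intro n
  induction n using Nat.strong_induction_on with
  | _ n ih =>
    rcases Nat.even_or_odd n with ⟨k, hk⟩ | ⟨k, hk⟩
    · rw [show n = 2 * k by omega, hae]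
      rcases Nat.eq_zero_or_pos k with h | h
      · simp [h, ha0]
      · exact ih k (by omega)
    · rw [show n = 2 * k + 1 by omega, hao]; omega

private lemma ptm_key (a : ℕ → ℕ) (ha0 : a 0 = 0)
    (hae : ∀ k, a (2 * k) = a k) (hao : ∀ k, a (2 * k + 1) = 1 - a k) :
    ∀ M : ℕ, ∀ m ≤ M,
      ∑ n ∈ Finset.range (2 ^ (M + 1)), (1 - 2 * (a n : ℤ)) * (n : ℤ) ^ m = 0 := by
  have hle := ptm_le_one a ha0 hae hao
  intro M
  induction M with
  | zero =>
    intro m hm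
    interval_cases m
    have h1 : a 1 = 1 := by have := hao 0; simp [ha0] at this; omega
    norm_num [Finset.sum_range_succ, ha0, h1]
  | succ M ih =>
    intro m hm
    have hexp : ∀ k : ℕ, (2 * (k : ℤ)) ^ m - (2 * (k : ℤ) + 1) ^ m
        = -∑ j ∈ Finset.range m, (2 * (k : ℤ)) ^ j * (m.choose j : ℤ) := by
      intro k
      rw [add_pow, Finset.sum_range_succ]
      simp [Nat.choose_self]
    calc ∑ n ∈ Finset.range (2 ^ (M + 1 + 1)), (1 - 2 * (a n : ℤ)) * (n : ℤ) ^ m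
        = ∑ k ∈ Finset.range (2 ^ (M + 1)),
            ((1 - 2 * (a (2 * k) : ℤ)) * ((2 * k : ℕ) : ℤ) ^ m
              + (1 - 2 * (a (2 * k + 1) : ℤ)) * ((2 * k + 1 : ℕ) : ℤ) ^ m) := by
          rw [show 2 ^ (M + 1 + 1) = 2 * 2 ^ (M + 1) by ring, sum_range_two_mul']
      _ = ∑ k ∈ Finset.range (2 ^ (M + 1)), ∑ j ∈ Finset.range m,
            (-(m.choose j : ℤ) * 2 ^ j) * ((1 - 2 * (a k : ℤ)) * (k : ℤ) ^ j) := by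
          refine Finset.sum_congr rfl fun k _ => ?_
          have hcast : ((a (2 * k + 1) : ℤ)) = 1 - (a k : ℤ) := by
            rw [hao, Nat.cast_sub (hle k)]; simp
          rw [hae, hcast]
          push_cast
          have : (1 - 2 * (a k : ℤ)) * (2 * (k:ℤ)) ^ m
              + (1 - 2 * (1 - (a k : ℤ))) * (2 * (k:ℤ) + 1) ^ m
              = (1 - 2 * (a k : ℤ)) * ((2 * (k:ℤ)) ^ m - (2 * (k:ℤ) + 1) ^ m) := by
            ring
          rw [this, hexp, mul_neg, Finset.mul_sum, ← Finset.sum_neg_distrib]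
          exact Finset.sum_congr rfl fun j _ => by ring
      _ = 0 := by
          rw [Finset.sum_comm]
          refine Finset.sum_eq_zero fun j hj => ?_
          have hjM : j ≤ M := by have := Finset.mem_range.mp hj; omega
          rw [← Finset.mul_sum, ih j hjM, mul_zero]

/-- (Theorem 1, Section IV, quantitative form) With `(a_n)` the PTM sequence,
`N = 2^{M+1}`, `β_m = Σ_{n<N} a_n n^m`, and `s_n = x` if `a_n = 0`, `s_n = y` if
`a_n = 1`: for every `0 ≤ m ≤ M` and every lag `-(L-1) ≤ k ≤ L-1`,
`Σ_{n<N} n^m C_{s_n}(k) = β_m (C_x(k) + C_y(k))`; in particular, if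
`|C_x(k) + C_y(k)| ≤ δ` for all `0 < |k| < Z`, then
`|Σ_{n<N} n^m C_{s_n}(k)| ≤ β_m δ` for all such `k` and all `0 ≤ m ≤ M`. -/
theorem stmt16 (M L Z : ℕ) (hZ1 : 1 ≤ Z) (hZL : Z ≤ L)
    (a : ℕ → ℕ) (ha0 : a 0 = 0)
    (hae : ∀ k, a (2 * k) = a k) (hao : ∀ k, a (2 * k + 1) = 1 - a k)
    (x y : ℕ → ℂ) (s : ℕ → ℕ → ℂ) (hs : ∀ n, s n = if a n = 0 then x else y)
    (δ : ℝ) (hδ : 0 ≤ δ) :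
    (∀ m ≤ M, ∀ k : ℤ, |k| ≤ (L : ℤ) - 1 →
      ∑ n ∈ Finset.range (2 ^ (M + 1)), (n : ℂ) ^ m * aCorr L (s n) (s n) k
        = ((∑ n ∈ Finset.range (2 ^ (M + 1)), a n * n ^ m : ℕ) : ℂ)
            * (aCorr L x x k + aCorr L y y k)) ∧
    ((∀ k : ℤ, 0 < |k| → |k| < (Z : ℤ) →
        ‖aCorr L x x k + aCorr L y y k‖ ≤ δ) →
      ∀ m ≤ M, ∀ k : ℤ, 0 < |k| → |k| < (Z : ℤ) →
        ‖∑ n ∈ Finset.range (2 ^ (M + 1)),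
            (n : ℂ) ^ m * aCorr L (s n) (s n) k‖
          ≤ ((∑ n ∈ Finset.range (2 ^ (M + 1)), a n * n ^ m : ℕ) : ℝ) * δ) := by
  have hle := ptm_le_one a ha0 hae hao
  have hkey := ptm_key a ha0 hae hao M
  -- equal split sums in ℂ
  have hβ : ∀ m ≤ M,
      ∑ n ∈ Finset.range (2 ^ (M + 1)), (1 - (a n : ℂ)) * (n : ℂ) ^ m
        = ∑ n ∈ Finset.range (2 ^ (M + 1)), (a n : ℂ) * (n : ℂ) ^ m := by
    intro m hm
    have h := hkey m hm
    have h2 : (↑(∑ n ∈ Finset.range (2 ^ (M + 1)),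
        (1 - 2 * (a n : ℤ)) * (n : ℤ) ^ m) : ℂ) = 0 := by rw [h]; simp
    push_cast at h2
    have := sub_eq_zero.mpr (rfl :
      (0 : ℂ) = 0)
    rw [← sub_eq_zero]
    rw [← Finset.sum_sub_distrib]
    rw [← h2]
    exact Finset.sum_congr rfl fun n _ => by ring
  have hmain : ∀ m ≤ M, ∀ k : ℤ,
      ∑ n ∈ Finset.range (2 ^ (M + 1)), (n : ℂ) ^ m * aCorr L (s n) (s n) k
        = ((∑ n ∈ Finset.range (2 ^ (M + 1)), a n * n ^ m : ℕ) : ℂ)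
            * (aCorr L x x k + aCorr L y y k) := by
    intro m hm k
    have hterm : ∀ n : ℕ, (n : ℂ) ^ m * aCorr L (s n) (s n) k
        = (1 - (a n : ℂ)) * (n : ℂ) ^ m * aCorr L x x k
          + (a n : ℂ) * (n : ℂ) ^ m * aCorr L y y k := by
      intro n
      rcases Nat.eq_zero_or_pos (a n) with h | h
      · rw [hs n, if_pos h, h]; push_cast; ring
      · have h1 : a n = 1 := le_antisymm (hle n) h
        rw [hs n, if_neg (by omega), h1]; push_cast; ring
    calc ∑ n ∈ Finset.range (2 ^ (M + 1)), (n : ℂ) ^ m * aCorr L (s n) (s n) k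
        = (∑ n ∈ Finset.range (2 ^ (M + 1)), (1 - (a n : ℂ)) * (n : ℂ) ^ m)
            * aCorr L x x k
          + (∑ n ∈ Finset.range (2 ^ (M + 1)), (a n : ℂ) * (n : ℂ) ^ m)
            * aCorr L y y k := by
          rw [Finset.sum_mul, Finset.sum_mul, ← Finset.sum_add_distrib]
          exact Finset.sum_congr rfl fun n _ => hterm n
      _ = ((∑ n ∈ Finset.range (2 ^ (M + 1)), a n * n ^ m : ℕ) : ℂ)
            * (aCorr L x x k + aCorr L y y k) := by
          rw [hβ m hm]
          push_cast
          ring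
  refine ⟨fun m hm k _ => hmain m hm k, fun hδ2 m hm k hk1 hk2 => ?_⟩
  rw [hmain m hm k, norm_mul, Complex.norm_natCast]
  exact mul_le_mul_of_nonneg_left (hδ2 k hk1 hk2) (Nat.cast_nonneg _)
end
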